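/- Let k be a field and I = (x_1x_2, x_2x_3, x_1x_3) ⊆ k[x_1,x_2,x_3]. Then for every t ≥ 1, (x_1,x_2)^{4t} ∩ (x_2,x_3)^{4t} ∩ (x_1,x_3)^{4t} ⊆ I^{3t}. -/

import Mathlib

open MvPolynomial

private lemma coeff_mul_ne_zero' {k : Type*} [CommSemiring k]
    {p q : MvPolynomial (Fin 3) k} {m : Fin 3 →₀ ℕ}
    (h : coeff m (p * q) ≠ 0) :
    ∃ u v, u + v = m ∧ coeff u p ≠ 0 ∧ coeff v q ≠ 0 := by
  rw [coeff_mul] at h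
  obtain ⟨x, hx, hne⟩ := Finset.exists_ne_zero_of_sum_ne_zero h
  exact ⟨x.1, x.2, Finset.HasAntidiagonal.mem_antidiagonal.mp hx, left_ne_zero_of_mul hne,
    right_ne_zero_of_mul hne⟩

/-- The ideal of polynomials all of whose monomials `m` satisfy `n ≤ m i + m j`. -/
private def pairIdeal (k : Type*) [Field k] (i j : Fin 3) (n : ℕ) :
    Ideal (MvPolynomial (Fin 3) k) where
  carrier := {p | ∀ m : Fin 3 →₀ ℕ, coeff m p ≠ 0 → n ≤ m i + m j}
  zero_mem' := fun m hm => absurd (coeff_zero m) hm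
  add_mem' := by
    intro a b ha hb m hm
    have h : coeff m a ≠ 0 ∨ coeff m b ≠ 0 := by
      by_contra h
      push_neg at h
      simp [coeff_add, h.1, h.2] at hm
    rcases h with h | h
    exacts [ha m h, hb m h]
  smul_mem' := by
    intro c p hp m hm
    rw [smul_eq_mul] at hm
    obtain ⟨u, v, huv, _, hv⟩ := coeff_mul_ne_zero' hm
    have h1 := hp v hv
    have h2 : v i ≤ m i := by rw [← huv]; simp
    have h3 : v j ≤ m j := by rw [← huv]; simp
    omega

private lemma span_pow_le {k : Type*} [Field k] (i j : Fin 3) (hij : i ≠ j) (n : ℕ) :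
    (Ideal.span {X i, X j} : Ideal (MvPolynomial (Fin 3) k)) ^ n ≤ pairIdeal k i j n := by
  induction n with
  | zero => intro p _ m _; exact Nat.zero_le _
  | succ n ih =>
    rw [pow_succ]
    refine Ideal.mul_le.mpr fun r hr s hs => ?_
    obtain ⟨a, b, hab⟩ := Ideal.mem_span_pair.mp hs
    have hr' := ih hr
    intro m hm
    rw [← hab, mul_add, ← mul_assoc, ← mul_assoc] at hm
    have h : coeff m (r * a * X i) ≠ 0 ∨ coeff m (r * b * X j) ≠ 0 := by
      by_contra h
      push_neg at h
      simp [coeff_add, h.1, h.2] at hm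
    have key : ∀ (c : MvPolynomial (Fin 3) k) (l : Fin 3), l = i ∨ l = j →
        coeff m (r * c * X l) ≠ 0 → n + 1 ≤ m i + m j := by
      intro c l hl hc
      rw [coeff_mul_X'] at hc
      have hls : l ∈ m.support := by
        by_contra hls
        simp [hls] at hc
      rw [if_pos hls] at hc
      have hml : 1 ≤ m l := Nat.one_le_iff_ne_zero.mpr (Finsupp.mem_support_iff.mp hls)
      obtain ⟨u, v, huv, hu, _⟩ := coeff_mul_ne_zero' hc
      have h1 := hr' u hu
      have h2 : u i ≤ ((m - Finsupp.single l 1 : Fin 3 →₀ ℕ)) i := by rw [← huv]; simp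
      have h3 : u j ≤ ((m - Finsupp.single l 1 : Fin 3 →₀ ℕ)) j := by rw [← huv]; simp
      have h4 : ((m - Finsupp.single l 1 : Fin 3 →₀ ℕ)) i = m i - Finsupp.single l 1 i :=
        Finsupp.tsub_apply _ _ _
      have h5 : ((m - Finsupp.single l 1 : Fin 3 →₀ ℕ)) j = m j - Finsupp.single l 1 j :=
        Finsupp.tsub_apply _ _ _
      rcases hl with rfl | rfl
      · have h6 : Finsupp.single l 1 l = 1 := Finsupp.single_eq_same
        have h7 : Finsupp.single l 1 j = 0 := Finsupp.single_eq_of_ne' hij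
        omega
      · have h6 : Finsupp.single l 1 l = 1 := Finsupp.single_eq_same
        have h7 : Finsupp.single l 1 i = 0 := Finsupp.single_eq_of_ne' (Ne.symm hij)
        omega
    rcases h with h | h
    · exact key a i (Or.inl rfl) h
    · exact key b j (Or.inr rfl) h

/-- for `I = (x₁x₂, x₂x₃, x₁x₃)` in `k[x₁,x₂,x₃]`, one has
`(x₁,x₂)^{4t} ∩ (x₂,x₃)^{4t} ∩ (x₁,x₃)^{4t} ⊆ I^{3t}` for every `t ≥ 1`. -/
theorem stmt_9 (k : Type*) [Field k]
    (I : Ideal (MvPolynomial (Fin 3) k))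
    (hI : I = Ideal.span {X 0 * X 1, X 1 * X 2, X 0 * X 2})
    (t : ℕ) (ht : 1 ≤ t) :
    (Ideal.span {X 0, X 1} : Ideal (MvPolynomial (Fin 3) k)) ^ (4 * t) ⊓
        (Ideal.span {X 1, X 2}) ^ (4 * t) ⊓ (Ideal.span {X 0, X 2}) ^ (4 * t)
      ≤ I ^ (3 * t) := by
  intro p hp
  obtain ⟨⟨hp01, hp12⟩, hp02⟩ := hp
  have h01 := span_pow_le (k := k) 0 1 (by decide) (4 * t) hp01
  have h12 := span_pow_le (k := k) 1 2 (by decide) (4 * t) hp12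
  have h02 := span_pow_le (k := k) 0 2 (by decide) (4 * t) hp02
  have hgen1 : (X 0 * X 1 : MvPolynomial (Fin 3) k) ∈ I := hI ▸ Ideal.subset_span (by simp)
  have hgen2 : (X 1 * X 2 : MvPolynomial (Fin 3) k) ∈ I := hI ▸ Ideal.subset_span (by simp)
  have hgen3 : (X 0 * X 2 : MvPolynomial (Fin 3) k) ∈ I := hI ▸ Ideal.subset_span (by simp)
  rw [← support_sum_monomial_coeff p]
  refine Ideal.sum_mem _ fun m hm => ?_
  have hcm : coeff m p ≠ 0 := Finsupp.mem_support_iff.mp hm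
  have c1 : 4 * t ≤ m 0 + m 1 := h01 m hcm
  have c2 : 4 * t ≤ m 1 + m 2 := h12 m hcm
  have c3 : 4 * t ≤ m 0 + m 2 := h02 m hcm
  -- choose exponents
  set a := m 0 with ha
  set b := m 1 with hb
  set c := m 2 with hc
  obtain ⟨pp, qq, rr, hsum, e1, e2, e3⟩ :
      ∃ pp qq rr : ℕ, pp + qq + rr = 3 * t ∧ pp + rr ≤ a ∧ pp + qq ≤ b ∧ qq + rr ≤ c :=
    ⟨3 * t - c, 3 * t - a, 3 * t - (3 * t - c) - (3 * t - a), by omega, by omega, by omega,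
      by omega⟩
  obtain ⟨a', ha'⟩ : ∃ a', a = pp + rr + a' := ⟨a - pp - rr, by omega⟩
  obtain ⟨b', hb'⟩ : ∃ b', b = pp + qq + b' := ⟨b - pp - qq, by omega⟩
  obtain ⟨c', hc'⟩ : ∃ c', c = qq + rr + c' := ⟨c - qq - rr, by omega⟩
  have hmono : (monomial m (coeff m p) : MvPolynomial (Fin 3) k)
      = ((X 0 * X 1) ^ pp * (X 1 * X 2) ^ qq * (X 0 * X 2) ^ rr)
        * (C (coeff m p) * X 0 ^ a' * X 1 ^ b' * X 2 ^ c') := by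
    rw [monomial_eq, Finsupp.prod_pow, Fin.prod_univ_three]
    rw [← ha, ← hb, ← hc, ha', hb', hc']
    ring
  rw [hmono]
  refine Ideal.mul_mem_right _ _ ?_
  have : (3 : ℕ) * t = pp + qq + rr := hsum.symm
  rw [this, pow_add, pow_add]
  exact Ideal.mul_mem_mul
    (Ideal.mul_mem_mul (Ideal.pow_mem_pow hgen1 pp) (Ideal.pow_mem_pow hgen2 qq))
    (Ideal.pow_mem_pow hgen3 rr)
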